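/- Lyapunov control design makes the Hilbert–Schmidt distance to the target monotonically nonincreasing: let n ≥ 1 and let H0, H1, ρ_d be Hermitian n×n complex matrices with H0 * ρ_d = ρ_d * H0, and let κ > 0. Suppose ρ : ℝ → Matrix (Fin n) (Fin n) ℂ is differentiable and satisfies the controlled von Neumann equation ρ'(t) = −i • ((H0 + f(t) • H1) * ρ(t) − ρ(t) * (H0 + f(t) • H1)) with feedback field f(t) = κ · (trace ((i • (H1 * ρ_d − ρ_d * H1)) * ρ(t))).re. Then V(t) = ½ · (trace ((ρ(t) − ρ_d) * (ρ(t) − ρ_d))).re is differentiable with derivative V'(t) = −f(t)²/κ; in particular V'(t) ≤ 0 for all t. -/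

import Mathlib

open Matrix

attribute [local instance] Matrix.normedAddCommGroup Matrix.normedSpace

theorem key_trace (n : ℕ) (H0 H1 ρd X : Matrix (Fin n) (Fin n) ℂ)
    (hcomm : H0 * ρd = ρd * H0) (c : ℝ) :
    (((-Complex.I) • ((H0 + c • H1) * X - X * (H0 + c • H1))) * (X - ρd)).trace
      = -(c : ℂ) * ((Complex.I • (H1 * ρd - ρd * H1)) * X).trace := by
  simp only [smul_mul_assoc, trace_smul, mul_sub, sub_mul, add_mul, mul_add,
    trace_sub, trace_add, mul_smul_comm, smul_eq_mul, Complex.real_smul]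
  rw [trace_mul_cycle H0 X X, trace_mul_cycle H1 X X,
    trace_mul_cycle H0 X ρd, trace_mul_cycle H1 X ρd,
    ← trace_mul_cycle H0 ρd X, ← trace_mul_cycle H1 ρd X, hcomm]
  ring

/-- Lyapunov control design makes the Hilbert–Schmidt distance to the target
monotonically nonincreasing: if `ρ(t)` solves the controlled von Neumann equation
`ρ' = −i[H0 + f(t)H1, ρ]` with the feedback field `f(t) = κ Tr([iH1, ρ_d] ρ(t))`,
and `[H0, ρ_d] = 0`, then `V(t) = ½ Tr((ρ(t) − ρ_d)²)` has derivative
`V'(t) = −f(t)²/κ ≤ 0`. -/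
theorem lyapunov_distance_nonincreasing (n : ℕ) (hn : 1 ≤ n)
    (H0 H1 ρd : Matrix (Fin n) (Fin n) ℂ)
    (hH0 : H0.IsHermitian) (hH1 : H1.IsHermitian) (hρd : ρd.IsHermitian)
    (hcomm : H0 * ρd = ρd * H0)
    (κ : ℝ) (hκ : 0 < κ)
    (ρ : ℝ → Matrix (Fin n) (Fin n) ℂ) (f : ℝ → ℝ)
    (hf : ∀ t, f t = κ * ((Complex.I • (H1 * ρd - ρd * H1)) * ρ t).trace.re)
    (hρ : ∀ t, HasDerivAt ρ
      ((-Complex.I) • ((H0 + f t • H1) * ρ t - ρ t * (H0 + f t • H1))) t) :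
    ∀ t, HasDerivAt (fun τ => (1 / 2 : ℝ) * ((ρ τ - ρd) * (ρ τ - ρd)).trace.re)
        (-(f t) ^ 2 / κ) t ∧ -(f t) ^ 2 / κ ≤ 0 := by
  intro t
  set D : Matrix (Fin n) (Fin n) ℂ :=
    (-Complex.I) • ((H0 + f t • H1) * ρ t - ρ t * (H0 + f t • H1)) with hD
  set X : Matrix (Fin n) (Fin n) ℂ := ρ t - ρd with hX
  have hentry : ∀ i j, HasDerivAt (fun τ => ρ τ i j) (D i j) t := by
    intro i j
    exact hasDerivAt_pi.1 (hasDerivAt_pi.1 (hρ t) i) j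
  have hg : HasDerivAt
      (fun τ => ∑ i, ∑ j, (ρ τ i j - ρd i j) * (ρ τ j i - ρd j i))
      (∑ i, ∑ j, (D i j * (ρ t j i - ρd j i) + (ρ t i j - ρd i j) * D j i)) t := by
    refine HasDerivAt.fun_sum fun i _ => HasDerivAt.fun_sum fun j _ => ?_
    exact ((hentry i j).sub_const _).mul ((hentry j i).sub_const _)
  -- sum equals 2 * trace (D * X)
  have h1 : (D * X).trace = ∑ i, ∑ j, D i j * X j i := by
    simp [Matrix.trace, Matrix.mul_apply, Matrix.diag]
  have h2 : (D * X).trace = ∑ i, ∑ j, X i j * D j i := by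
    rw [trace_mul_comm]
    simp [Matrix.trace, Matrix.mul_apply, Matrix.diag]
  have hsum : (∑ i, ∑ j, (D i j * (ρ t j i - ρd j i) + (ρ t i j - ρd i j) * D j i))
      = 2 * (D * X).trace := by
    have : ∀ i j, X i j = ρ t i j - ρd i j := by intro i j; simp [hX]
    simp only [← this, ← Finset.sum_add_distrib]
    rw [two_mul]
    nth_rewrite 1 [h1]
    nth_rewrite 1 [h2]
    rw [← Finset.sum_add_distrib]
    exact Finset.sum_congr rfl fun i _ => Finset.sum_add_distrib
  have hkey : (D * X).trace
      = -(f t : ℂ) * ((Complex.I • (H1 * ρd - ρd * H1)) * ρ t).trace :=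
    key_trace n H0 H1 ρd (ρ t) hcomm (f t)
  set T := ((Complex.I • (H1 * ρd - ρd * H1)) * ρ t).trace with hT
  have hre : HasDerivAt
      (fun τ => (1 / 2 : ℝ) * Complex.reCLM (∑ i, ∑ j, (ρ τ i j - ρd i j) * (ρ τ j i - ρd j i)))
      ((1 / 2 : ℝ) * Complex.reCLM (∑ i, ∑ j, (D i j * (ρ t j i - ρd j i) + (ρ t i j - ρd i j) * D j i))) t :=
    (Complex.reCLM.hasFDerivAt.comp_hasDerivAt t hg).const_mul _
  have hval : (1 / 2 : ℝ) * Complex.reCLM (∑ i, ∑ j, (D i j * (ρ t j i - ρd j i) + (ρ t i j - ρd i j) * D j i))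
      = -(f t) ^ 2 / κ := by
    rw [hsum, hkey]
    have hc : (2 : ℂ) * (-(f t : ℂ) * T) = ((-2 * f t : ℝ) : ℂ) * T := by push_cast; ring
    simp only [Complex.reCLM_apply]
    rw [hc, Complex.re_ofReal_mul]
    have hTre : T.re = f t / κ := by
      rw [eq_div_iff hκ.ne']; linarith [(hf t).symm]
    rw [hTre]
    field_simp
  have hfun : (fun τ => (1 / 2 : ℝ) * ((ρ τ - ρd) * (ρ τ - ρd)).trace.re)
      = (fun τ => (1 / 2 : ℝ) * Complex.reCLM (∑ i, ∑ j, (ρ τ i j - ρd i j) * (ρ τ j i - ρd j i))) := by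
    funext τ
    simp [Matrix.trace, Matrix.mul_apply, Matrix.diag, Matrix.sub_apply]
  constructor
  · rw [hfun]
    rw [hval] at hre
    exact hre
  · apply div_nonpos_of_nonpos_of_nonneg (neg_nonpos.2 (sq_nonneg _)) hκ.le
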